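/- Let θ : S → T be a premorphism of inverse semigroups, and suppose a, b ∈ S satisfy either a⁻¹*a ≥ b*b⁻¹ or a⁻¹*a ≤ b*b⁻¹ in the natural partial order. Then θ(a*b) = θ(a)*θ(b). -/
import Mathlib


/-- An inverse semigroup: a semigroup in which every element `a` has a
(unique) inverse `a⁻¹` with `a * a⁻¹ * a = a` and `a⁻¹ * a * a⁻¹ = a⁻¹`. -/
class InverseSemigroup (S : Type*) extends Semigroup S, Inv S where
  mul_inv_mul : ∀ a : S, a * a⁻¹ * a = a
  inv_mul_inv : ∀ a : S, a⁻¹ * a * a⁻¹ = a⁻¹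
  inv_unique : ∀ a b : S, a * b * a = a → b * a * b = b → b = a⁻¹

/-- The natural partial order on an inverse semigroup:
`a ≤ b` iff `a = e * b` for some idempotent `e`. -/
def npo {S : Type*} [InverseSemigroup S] (a b : S) : Prop :=
  ∃ e : S, e * e = e ∧ a = e * b

/-- A premorphism of inverse semigroups: `θ (a * b) ≤ θ a * θ b` in the
natural partial order of the codomain. -/
def IsPremorphism {S T : Type*} [InverseSemigroup S] [InverseSemigroup T]
    (θ : S → T) : Prop :=
  ∀ a b : S, npo (θ (a * b)) (θ a * θ b)

namespace ISaux

open InverseSemigroup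

variable {S : Type*} [InverseSemigroup S]

lemma inv_inv' (a : S) : a⁻¹⁻¹ = a :=
  (InverseSemigroup.inv_unique a⁻¹ a (inv_mul_inv a) (mul_inv_mul a)).symm

lemma idem_inv {e : S} (he : e * e = e) : e⁻¹ = e := by
  have h : e * e * e = e := by rw [he, he]
  exact (InverseSemigroup.inv_unique e e h h).symm

lemma mulinv_idem (a : S) : (a * a⁻¹) * (a * a⁻¹) = a * a⁻¹ := by
  rw [← mul_assoc, mul_inv_mul]

lemma invmul_idem (a : S) : (a⁻¹ * a) * (a⁻¹ * a) = a⁻¹ * a := by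
  rw [← mul_assoc, inv_mul_inv]

lemma idem_mul_idem {e f : S} (he : e * e = e) (hf : f * f = f) :
    (e * f) * (e * f) = e * f := by
  have h1 : f * (e*f)⁻¹ * e = (e*f)⁻¹ := by
    apply InverseSemigroup.inv_unique
    · calc (e*f) * (f * (e*f)⁻¹ * e) * (e*f)
          = (e*(f*f)) * (e*f)⁻¹ * ((e*e)*f) := by simp only [mul_assoc]
        _ = (e*f) * (e*f)⁻¹ * (e*f) := by rw [he, hf]
        _ = e*f := mul_inv_mul _
    · calc (f * (e*f)⁻¹ * e) * (e*f) * (f * (e*f)⁻¹ * e)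
          = f * ((e*f)⁻¹ * ((e*e) * ((f*f) * ((e*f)⁻¹ * e)))) := by
            simp only [mul_assoc]
        _ = f * ((e*f)⁻¹ * (e * (f * ((e*f)⁻¹ * e)))) := by rw [he, hf]
        _ = f * ((e*f)⁻¹ * (e*f) * (e*f)⁻¹) * e := by simp only [mul_assoc]
        _ = f * (e*f)⁻¹ * e := by rw [inv_mul_inv, mul_assoc]
  have h2 : (e*f)⁻¹ * (e*f)⁻¹ = (e*f)⁻¹ := by
    conv_lhs => rw [← h1]
    calc (f * (e*f)⁻¹ * e) * (f * (e*f)⁻¹ * e)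
        = f * ((e*f)⁻¹ * (e*f) * ((e*f)⁻¹ * e)) := by simp only [mul_assoc]
      _ = f * ((e*f)⁻¹ * (e*f) * (e*f)⁻¹) * e := by simp only [mul_assoc]
      _ = f * (e*f)⁻¹ * e := by rw [inv_mul_inv, mul_assoc]
      _ = (e*f)⁻¹ := h1
  calc (e*f) * (e*f) = (e*f)⁻¹⁻¹ * (e*f)⁻¹⁻¹ := by rw [inv_inv']
    _ = (e*f)⁻¹ * (e*f)⁻¹ := by rw [idem_inv h2]
    _ = (e*f)⁻¹ := h2
    _ = (e*f)⁻¹⁻¹ := by rw [idem_inv h2]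
    _ = e*f := inv_inv' _

lemma idem_comm {e f : S} (he : e * e = e) (hf : f * f = f) :
    e * f = f * e := by
  have hef := idem_mul_idem he hf
  have hfe := idem_mul_idem hf he
  have h : f * e = (e*f)⁻¹ := by
    apply InverseSemigroup.inv_unique
    · calc (e*f) * (f*e) * (e*f) = (e*(f*f)) * ((e*e)*f) := by
            simp only [mul_assoc]
        _ = (e*f) * (e*f) := by rw [he, hf]
        _ = e*f := hef
    · calc (f*e) * (e*f) * (f*e) = (f*(e*e)) * ((f*f)*e) := by
            simp only [mul_assoc]
        _ = (f*e) * (f*e) := by rw [he, hf]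
        _ = f*e := hfe
  rw [h, idem_inv hef]

lemma mul_inv_rev' (a b : S) : (a * b)⁻¹ = b⁻¹ * a⁻¹ := by
  symm
  apply InverseSemigroup.inv_unique
  · calc (a*b) * (b⁻¹*a⁻¹) * (a*b)
        = a * ((b*b⁻¹) * (a⁻¹*a)) * b := by simp only [mul_assoc]
      _ = a * ((a⁻¹*a) * (b*b⁻¹)) * b := by
          rw [idem_comm (mulinv_idem b) (invmul_idem a)]
      _ = (a*a⁻¹*a) * (b*b⁻¹*b) := by simp only [mul_assoc]
      _ = a*b := by rw [mul_inv_mul, mul_inv_mul]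
  · calc (b⁻¹*a⁻¹) * (a*b) * (b⁻¹*a⁻¹)
        = b⁻¹ * ((a⁻¹*a) * (b*b⁻¹)) * a⁻¹ := by simp only [mul_assoc]
      _ = b⁻¹ * ((b*b⁻¹) * (a⁻¹*a)) * a⁻¹ := by
          rw [idem_comm (invmul_idem a) (mulinv_idem b)]
      _ = (b⁻¹*b*b⁻¹) * (a⁻¹*a*a⁻¹) := by simp only [mul_assoc]
      _ = b⁻¹*a⁻¹ := by rw [inv_mul_inv, inv_mul_inv]

lemma npo_elim {x z : S} (h : npo x z) : x = x * x⁻¹ * z := by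
  obtain ⟨e, hee, hxz⟩ := h
  rw [hxz, mul_inv_rev', idem_inv hee]
  symm
  calc (e*z)*(z⁻¹*e)*z = e*(((z*z⁻¹)*e)*z) := by simp only [mul_assoc]
    _ = e*((e*(z*z⁻¹))*z) := by rw [idem_comm (mulinv_idem z) hee]
    _ = (e*e)*((z*z⁻¹)*z) := by simp only [mul_assoc]
    _ = e*z := by rw [hee, mul_inv_mul]

lemma npo_trans {x y z : S} (h1 : npo x y) (h2 : npo y z) : npo x z := by
  obtain ⟨e, hee, hxy⟩ := h1
  obtain ⟨f, hff, hyz⟩ := h2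
  exact ⟨e*f, idem_mul_idem hee hff, by rw [hxy, hyz, mul_assoc]⟩

lemma npo_antisymm {x y : S} (hxy : npo x y) (hyx : npo y x) : x = y := by
  have h1 := npo_elim hxy
  have h2 := npo_elim hyx
  calc x = x*x⁻¹*y := h1
    _ = y := by
      conv_lhs => rw [h2]
      calc x*x⁻¹*(y*y⁻¹*x) = ((x*x⁻¹)*(y*y⁻¹))*x := by simp only [mul_assoc]
        _ = ((y*y⁻¹)*(x*x⁻¹))*x := by
            rw [idem_comm (mulinv_idem x) (mulinv_idem y)]
        _ = (y*y⁻¹)*(x*x⁻¹*x) := by simp only [mul_assoc]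
        _ = y*y⁻¹*x := by rw [mul_inv_mul]
        _ = y := h2.symm

lemma npo_mul_right {x y : S} (h : npo x y) (c : S) : npo (x*c) (y*c) := by
  obtain ⟨e, hee, hxy⟩ := h
  exact ⟨e, hee, by rw [hxy, mul_assoc]⟩

lemma npo_mul_left {x y : S} (h : npo x y) (c : S) : npo (c*x) (c*y) := by
  obtain ⟨e, hee, hxy⟩ := h
  refine ⟨c*e*c⁻¹, ?_, ?_⟩
  · calc (c*e*c⁻¹)*(c*e*c⁻¹) = c * (e * ((c⁻¹*c) * (e*c⁻¹))) := by
          simp only [mul_assoc]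
      _ = c * ((e*(c⁻¹*c)) * e) * c⁻¹ := by simp only [mul_assoc]
      _ = c * (((c⁻¹*c)*e) * e) * c⁻¹ := by
          rw [idem_comm hee (invmul_idem c)]
      _ = (c*(c⁻¹*c)) * ((e*e)*c⁻¹) := by simp only [mul_assoc]
      _ = (c*c⁻¹*c) * (e*c⁻¹) := by rw [hee]; simp only [mul_assoc]
      _ = c*e*c⁻¹ := by rw [mul_inv_mul, mul_assoc]
  · symm
    calc (c*e*c⁻¹)*(c*y) = c*((e*(c⁻¹*c))*y) := by simp only [mul_assoc]
      _ = c*(((c⁻¹*c)*e)*y) := by rw [idem_comm hee (invmul_idem c)]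
      _ = (c*c⁻¹*c)*(e*y) := by simp only [mul_assoc]
      _ = c*(e*y) := by rw [mul_inv_mul]
      _ = c*x := by rw [← hxy]

lemma npo_mul_idem_right {e : S} (hee : e * e = e) (x : S) : npo (x*e) x := by
  refine ⟨x*e*x⁻¹, ?_, ?_⟩
  · calc (x*e*x⁻¹)*(x*e*x⁻¹) = x * ((e*(x⁻¹*x)) * (e*x⁻¹)) := by
          simp only [mul_assoc]
      _ = x * (((x⁻¹*x)*e) * (e*x⁻¹)) := by
          rw [idem_comm hee (invmul_idem x)]
      _ = (x*(x⁻¹*x)) * ((e*e)*x⁻¹) := by simp only [mul_assoc]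
      _ = (x*x⁻¹*x) * (e*x⁻¹) := by rw [hee]; simp only [mul_assoc]
      _ = x*e*x⁻¹ := by rw [mul_inv_mul, mul_assoc]
  · calc x*e = (x*x⁻¹*x)*e := by rw [mul_inv_mul]
      _ = x * ((x⁻¹*x)*e) := by simp only [mul_assoc]
      _ = x * (e*(x⁻¹*x)) := by rw [idem_comm (invmul_idem x) hee]
      _ = (x*e*x⁻¹)*x := by simp only [mul_assoc]

lemma npo_idem_mul_left {e : S} (hee : e * e = e) (x : S) : npo (e*x) x :=
  ⟨e, hee, rfl⟩

variable {T : Type*} [InverseSemigroup T]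

lemma premorphism_mul_inv_mul {θ : S → T} (hθ : IsPremorphism θ) (b : S) :
    θ b * θ b⁻¹ * θ b = θ b := by
  have h1 : npo (θ b) (θ (b*b⁻¹) * θ b) := by
    have := hθ (b*b⁻¹) b
    rwa [mul_inv_mul] at this
  have h3 : npo (θ b) ((θ b * θ b⁻¹) * θ b) :=
    npo_trans h1 (npo_mul_right (hθ b b⁻¹) (θ b))
  have h4 := npo_elim h3
  calc θ b * θ b⁻¹ * θ b
      = (θ b * (θ b)⁻¹ * θ b) * (θ b⁻¹ * θ b) := by rw [mul_inv_mul, mul_assoc]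
    _ = θ b * (θ b)⁻¹ * ((θ b * θ b⁻¹) * θ b) := by simp only [mul_assoc]
    _ = θ b := h4.symm

lemma premorphism_inv {θ : S → T} (hθ : IsPremorphism θ) (b : S) :
    θ b⁻¹ = (θ b)⁻¹ := by
  apply InverseSemigroup.inv_unique
  · exact premorphism_mul_inv_mul hθ b
  · have := premorphism_mul_inv_mul hθ b⁻¹
    rwa [inv_inv'] at this

end ISaux

open ISaux InverseSemigroup in
theorem premorphism_is_hom_of_comparable {S T : Type*} [InverseSemigroup S] [InverseSemigroup T]
    (θ : S → T) (hθ : IsPremorphism θ) (a b : S)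
    (h : npo (b * b⁻¹) (a⁻¹ * a) ∨ npo (a⁻¹ * a) (b * b⁻¹)) :
    θ (a * b) = θ a * θ b := by
  rcases h with h | h
  · -- b*b⁻¹ ≤ a⁻¹*a : here b = a⁻¹*(a*b)
    have hprod : (a⁻¹*a)*(b*b⁻¹) = b*b⁻¹ := by
      obtain ⟨e, hee, hb⟩ := h
      calc (a⁻¹*a)*(b*b⁻¹) = (b*b⁻¹)*(a⁻¹*a) := by
            rw [idem_comm (invmul_idem a) (mulinv_idem b)]
        _ = e*((a⁻¹*a)*(a⁻¹*a)) := by rw [hb, mul_assoc]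
        _ = e*(a⁻¹*a) := by rw [invmul_idem]
        _ = b*b⁻¹ := hb.symm
    have hb2 : a⁻¹*(a*b) = b := by
      calc a⁻¹*(a*b) = (a⁻¹*a)*((b*b⁻¹)*b) := by
            rw [mul_inv_mul]; simp only [mul_assoc]
        _ = ((a⁻¹*a)*(b*b⁻¹))*b := by simp only [mul_assoc]
        _ = (b*b⁻¹)*b := by rw [hprod]
        _ = b := mul_inv_mul b
    have h1 : npo (θ b) ((θ a)⁻¹ * θ (a*b)) := by
      have := hθ a⁻¹ (a*b)
      rwa [hb2, premorphism_inv hθ] at this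
    have h2 : npo (θ a * θ b) (θ a * ((θ a)⁻¹ * θ (a*b))) :=
      npo_mul_left h1 (θ a)
    have h3 : npo (θ a * ((θ a)⁻¹ * θ (a*b))) (θ (a*b)) := by
      have := npo_idem_mul_left (mulinv_idem (θ a)) (θ (a*b))
      rwa [mul_assoc] at this
    exact npo_antisymm (hθ a b) (npo_trans h2 h3)
  · -- a⁻¹*a ≤ b*b⁻¹ : here a = (a*b)*b⁻¹
    have hprod : (a⁻¹*a)*(b*b⁻¹) = a⁻¹*a := by
      obtain ⟨e, hee, ha⟩ := h
      calc (a⁻¹*a)*(b*b⁻¹) = e*((b*b⁻¹)*(b*b⁻¹)) := by rw [ha, mul_assoc]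
        _ = e*(b*b⁻¹) := by rw [mulinv_idem]
        _ = a⁻¹*a := ha.symm
    have ha2 : (a*b)*b⁻¹ = a := by
      calc (a*b)*b⁻¹ = (a*(a⁻¹*a))*(b*b⁻¹) := by
            rw [show a*(a⁻¹*a) = a by rw [← mul_assoc, mul_inv_mul]]
            simp only [mul_assoc]
        _ = a*((a⁻¹*a)*(b*b⁻¹)) := by simp only [mul_assoc]
        _ = a*(a⁻¹*a) := by rw [hprod]
        _ = a := by rw [← mul_assoc, mul_inv_mul]
    have h1 : npo (θ a) (θ (a*b) * (θ b)⁻¹) := by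
      have := hθ (a*b) b⁻¹
      rwa [ha2, premorphism_inv hθ] at this
    have h2 : npo (θ a * θ b) ((θ (a*b) * (θ b)⁻¹) * θ b) :=
      npo_mul_right h1 (θ b)
    have h3 : npo ((θ (a*b) * (θ b)⁻¹) * θ b) (θ (a*b)) := by
      have := npo_mul_idem_right (invmul_idem (θ b)) (θ (a*b))
      rwa [← mul_assoc] at this
    exact npo_antisymm (hθ a b) (npo_trans h2 h3)
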